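/- arXiv:1208.4544 — 5 statements merged into one kernel-verified Lean document; each statement's English description precedes it below -/
import Mathlib

section
/- Let A, A0 be real n×n matrices such that the pair (A, A0) satisfies hypothesis (H0) with constants (c0, c1). Then A is invertible and the pair (A⁻¹, A0⁻¹) satisfies hypothesis (H0) with constants (c0/c1², 1/c0); that is, vᵀA⁻¹v ≥ (c0/c1²)·vᵀA0⁻¹v for all v ∈ ℝⁿ, and wᵀA⁻¹v ≤ (1/c0)·√(vᵀA0⁻¹v)·√(wᵀA0⁻¹w) for all v, w ∈ ℝⁿ. -/
open Matrix

lemma dot_symm {n : ℕ} {A0 : Matrix (Fin n) (Fin n) ℝ} (hA0 : A0.PosDef) (a b : Fin n → ℝ) :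
    a ⬝ᵥ A0.mulVec b = b ⬝ᵥ A0.mulVec a := by
  rw [dotProduct_mulVec, ← mulVec_transpose,
    ← conjTranspose_eq_transpose_of_trivial, hA0.isHermitian.eq, dotProduct_comm]

lemma cs_aux {n : ℕ} {A0 : Matrix (Fin n) (Fin n) ℝ} (hA0 : A0.PosDef) (x w : Fin n → ℝ) :
    w ⬝ᵥ A0.mulVec x ≤ Real.sqrt (x ⬝ᵥ A0.mulVec x) * Real.sqrt (w ⬝ᵥ A0.mulVec w) := by
  set a := x ⬝ᵥ A0.mulVec x with ha
  set c := w ⬝ᵥ A0.mulVec w with hc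
  set b := w ⬝ᵥ A0.mulVec x with hb
  have hanon : 0 ≤ a := hA0.posSemidef.re_dotProduct_nonneg x
  have hcnon : 0 ≤ c := hA0.posSemidef.re_dotProduct_nonneg w
  rcases eq_or_lt_of_le hanon with h0 | hpos
  · have hx : x = 0 := by
      by_contra hx
      exact absurd (hA0.dotProduct_mulVec_pos hx) (by simp [← ha, ← h0])
    simp [hb, hx, Real.sqrt_nonneg, mul_nonneg]
  · have key : b ^ 2 ≤ a * c := by
      have h : 0 ≤ (w - (b / a) • x) ⬝ᵥ A0.mulVec (w - (b / a) • x) :=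
        hA0.posSemidef.re_dotProduct_nonneg _
      have hexp : (w - (b / a) • x) ⬝ᵥ A0.mulVec (w - (b / a) • x)
          = c - b ^ 2 / a := by
        simp only [mulVec_sub, mulVec_smul, dotProduct_sub, sub_dotProduct,
          dotProduct_smul, smul_dotProduct, smul_eq_mul]
        rw [dot_symm hA0 x w]
        field_simp [← ha, ← hb, ← hc]
        ring
      rw [hexp] at h
      have := (div_le_iff₀ hpos).mp (by linarith : b ^ 2 / a ≤ c)
      linarith [this]
    calc b ≤ |b| := le_abs_self b
      _ = Real.sqrt (b ^ 2) := (Real.sqrt_sq_eq_abs b).symm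
      _ ≤ Real.sqrt (a * c) := Real.sqrt_le_sqrt key
      _ = Real.sqrt a * Real.sqrt c := Real.sqrt_mul hanon c

/-- If the pair (A, A0) satisfies hypothesis (H0) with constants (c0, c1)
(A0 symmetric positive definite), then A is invertible and the pair (A⁻¹, A0⁻¹)
satisfies (H0) with constants (c0/c1², 1/c0). -/
theorem stmt_0 {n : ℕ} (A A0 : Matrix (Fin n) (Fin n) ℝ) (c0 c1 : ℝ)
    (hc0 : 0 < c0) (hc1 : 0 < c1) (hA0 : A0.PosDef)
    (hcoer : ∀ v : Fin n → ℝ, c0 * (v ⬝ᵥ A0.mulVec v) ≤ v ⬝ᵥ A.mulVec v)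
    (hbdd : ∀ v w : Fin n → ℝ, w ⬝ᵥ A.mulVec v ≤
      c1 * Real.sqrt (v ⬝ᵥ A0.mulVec v) * Real.sqrt (w ⬝ᵥ A0.mulVec w)) :
    IsUnit A ∧
    (∀ v : Fin n → ℝ, (c0 / c1 ^ 2) * (v ⬝ᵥ A0⁻¹.mulVec v) ≤ v ⬝ᵥ A⁻¹.mulVec v) ∧
    (∀ v w : Fin n → ℝ, w ⬝ᵥ A⁻¹.mulVec v ≤
      (1 / c0) * Real.sqrt (v ⬝ᵥ A0⁻¹.mulVec v) * Real.sqrt (w ⬝ᵥ A0⁻¹.mulVec w)) := by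
  -- A is invertible
  have hdet : A.det ≠ 0 := by
    intro h
    obtain ⟨v, hv, hAv⟩ := (Matrix.exists_mulVec_eq_zero_iff).2 h
    have h1 := hcoer v
    rw [hAv] at h1
    simp only [dotProduct_zero] at h1
    have h2 : 0 < v ⬝ᵥ A0.mulVec v := hA0.dotProduct_mulVec_pos hv
    nlinarith
  have hunit : IsUnit A := (Matrix.isUnit_iff_isUnit_det A).2 (isUnit_iff_ne_zero.2 hdet)
  have hAAinv : A * A⁻¹ = 1 := Matrix.mul_nonsing_inv A (isUnit_iff_ne_zero.2 hdet)
  have hA0det : A0.det ≠ 0 := ne_of_gt hA0.det_pos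
  have hA0A0inv : A0 * A0⁻¹ = 1 := Matrix.mul_nonsing_inv A0 (isUnit_iff_ne_zero.2 hA0det)
  -- reconstruction: A *ᵥ (A⁻¹ *ᵥ v) = v
  have hrec : ∀ v : Fin n → ℝ, A.mulVec (A⁻¹.mulVec v) = v := fun v => by
    rw [Matrix.mulVec_mulVec, hAAinv, Matrix.one_mulVec]
  have hrec0 : ∀ v : Fin n → ℝ, A0.mulVec (A0⁻¹.mulVec v) = v := fun v => by
    rw [Matrix.mulVec_mulVec, hA0A0inv, Matrix.one_mulVec]
  -- key norm identity: (A0⁻¹ v) ⬝ᵥ A0 *ᵥ (A0⁻¹ v) = v ⬝ᵥ A0⁻¹ v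
  have hnorm : ∀ v : Fin n → ℝ,
      (A0⁻¹.mulVec v) ⬝ᵥ A0.mulVec (A0⁻¹.mulVec v) = v ⬝ᵥ A0⁻¹.mulVec v := fun v => by
    rw [hrec0, dotProduct_comm]
  have hinvnonneg : ∀ v : Fin n → ℝ, 0 ≤ v ⬝ᵥ A0⁻¹.mulVec v := fun v =>
    (hA0.inv).posSemidef.re_dotProduct_nonneg v
  -- Lemma: ‖A⁻¹ v‖₀ ≤ (1/c0) ‖v‖₀*  (in squared-root form)
  have hxbound : ∀ v : Fin n → ℝ,
      c0 * Real.sqrt ((A⁻¹.mulVec v) ⬝ᵥ A0.mulVec (A⁻¹.mulVec v))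
        ≤ Real.sqrt (v ⬝ᵥ A0⁻¹.mulVec v) := by
    intro v
    set x := A⁻¹.mulVec v with hx
    set s := Real.sqrt (x ⬝ᵥ A0.mulVec x) with hs
    have hsnn : 0 ≤ x ⬝ᵥ A0.mulVec x := hA0.posSemidef.re_dotProduct_nonneg x
    have hs2 : s * s = x ⬝ᵥ A0.mulVec x := Real.mul_self_sqrt hsnn
    have h1 : c0 * (x ⬝ᵥ A0.mulVec x) ≤ x ⬝ᵥ A.mulVec x := hcoer x
    have h2 : x ⬝ᵥ A.mulVec x = x ⬝ᵥ A0.mulVec (A0⁻¹.mulVec v) := by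
      rw [hrec, hrec0]
    have h3 : x ⬝ᵥ A0.mulVec (A0⁻¹.mulVec v) ≤
        Real.sqrt ((A0⁻¹.mulVec v) ⬝ᵥ A0.mulVec (A0⁻¹.mulVec v)) * s :=
      cs_aux hA0 (A0⁻¹.mulVec v) x
    rw [hnorm] at h3
    have key : c0 * (s * s) ≤ Real.sqrt (v ⬝ᵥ A0⁻¹.mulVec v) * s := by
      rw [hs2]; linarith
    rcases eq_or_lt_of_le (Real.sqrt_nonneg (x ⬝ᵥ A0.mulVec x)) with h0 | hpos
    · rw [hs, ← h0, mul_zero]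
      exact Real.sqrt_nonneg _
    · rw [← hs] at hpos
      have := (mul_le_mul_iff_of_pos_right hpos).mp (by linarith : (c0 * s) * s ≤ Real.sqrt (v ⬝ᵥ A0⁻¹.mulVec v) * s)
      linarith
  refine ⟨hunit, ?_, ?_⟩
  · -- coercivity for A⁻¹
    intro v
    set x := A⁻¹.mulVec v with hx
    have h1 : v ⬝ᵥ A⁻¹.mulVec v = x ⬝ᵥ A.mulVec x := by
      rw [← hx, hrec, dotProduct_comm]
    -- ‖v‖₀*² ≤ c1 ‖x‖₀ ‖v‖₀*
    have h2 : v ⬝ᵥ A0⁻¹.mulVec v = (A0⁻¹.mulVec v) ⬝ᵥ A.mulVec x := by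
      rw [hx, hrec]
      exact dotProduct_comm _ _
    have h3 := hbdd x (A0⁻¹.mulVec v)
    rw [hnorm] at h3
    set N := Real.sqrt (v ⬝ᵥ A0⁻¹.mulVec v) with hN
    set s := Real.sqrt (x ⬝ᵥ A0.mulVec x) with hs
    have hN2 : N * N = v ⬝ᵥ A0⁻¹.mulVec v := Real.mul_self_sqrt (hinvnonneg v)
    have hs2 : s * s = x ⬝ᵥ A0.mulVec x :=
      Real.mul_self_sqrt (hA0.posSemidef.re_dotProduct_nonneg x)
    -- from hxbound: c0 * s ≤ N
    have h4 : c0 * s ≤ N := hxbound v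
    -- N² ≤ c1 s N
    have h5 : N * N ≤ c1 * s * N := by rw [hN2, h2]; exact h3
    -- coercivity: c0 s² ≤ x⬝Ax
    have h6 : c0 * (s * s) ≤ x ⬝ᵥ A.mulVec x := by rw [hs2]; exact hcoer x
    -- conclude: (c0/c1²) N² ≤ c0 s² ≤ x⬝Ax = v⬝A⁻¹v
    have hNnn : 0 ≤ N := Real.sqrt_nonneg _
    have hsnn : 0 ≤ s := Real.sqrt_nonneg _
    have h7 : N ≤ c1 * s := by
      rcases eq_or_lt_of_le hNnn with h0 | hpos
      · nlinarith
      · exact le_of_mul_le_mul_right (by linarith) hpos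
    have h8 : (c0 / c1 ^ 2) * (N * N) ≤ c0 * (s * s) := by
      rw [div_mul_eq_mul_div, div_le_iff₀ (by positivity : (0:ℝ) < c1 ^ 2)]
      nlinarith [mul_le_mul h7 h7 hNnn (by positivity : (0:ℝ) ≤ c1 * s), hc0.le]
    rw [hN2] at h8
    rw [h1]
    linarith
  · -- boundedness for A⁻¹
    intro v w
    set x := A⁻¹.mulVec v with hx
    have h1 : w ⬝ᵥ A⁻¹.mulVec v = (A0⁻¹.mulVec w) ⬝ᵥ A0.mulVec x := by
      rw [dot_symm hA0, hrec0, ← hx, dotProduct_comm]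
    have h2 := cs_aux hA0 x (A0⁻¹.mulVec w)
    rw [hnorm] at h2
    have h3 := hxbound v
    rw [← hx] at h3
    set s := Real.sqrt (x ⬝ᵥ A0.mulVec x) with hs
    have hwnn : 0 ≤ Real.sqrt (w ⬝ᵥ A0⁻¹.mulVec w) := Real.sqrt_nonneg _
    have : s ≤ (1 / c0) * Real.sqrt (v ⬝ᵥ A0⁻¹.mulVec v) := by
      rw [div_mul_eq_mul_div, le_div_iff₀ hc0]
      linarith
    calc w ⬝ᵥ A⁻¹.mulVec v = (A0⁻¹.mulVec w) ⬝ᵥ A0.mulVec x := h1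
      _ ≤ s * Real.sqrt (w ⬝ᵥ A0⁻¹.mulVec w) := h2
      _ ≤ (1 / c0) * Real.sqrt (v ⬝ᵥ A0⁻¹.mulVec v) * Real.sqrt (w ⬝ᵥ A0⁻¹.mulVec w) := by
          apply mul_le_mul_of_nonneg_right this hwnn
end

section
/- Let A, A0 be real n×n matrices such that the pair (A, A0) satisfies hypothesis (H0) with constants (c0, c1). Let P be an n×n_c matrix and I_1, …, I_{N_s} be n×n_k matrices, each of full column rank, whose column spaces together span ℝⁿ. Set A_c = PᵀAP, A_k = I_kᵀAI_k, A_c⁽⁰⁾ = PᵀA0P, A_k⁽⁰⁾ = I_kᵀA0I_k (all invertible), and define the additive Schwarz operators C = P A_c⁻¹ Pᵀ + Σ_{k=1}^{N_s} I_k A_k⁻¹ I_kᵀ and C0 = P (A_c⁽⁰⁾)⁻¹ Pᵀ + Σ_{k=1}^{N_s} I_k (A_k⁽⁰⁾)⁻¹ I_kᵀ. Then C0 is symmetric positive definite and the pair (C, C0) satisfies hypothesis (H0) with constants (c0/c1², 1/c0). -/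
open Matrix

section Aux

variable {m : ℕ}

private lemma dot_symm_s7 {M : Matrix (Fin m) (Fin m) ℝ} (hM : Mᵀ = M)
    (x y : Fin m → ℝ) : x ⬝ᵥ M.mulVec y = y ⬝ᵥ M.mulVec x := by
  rw [dotProduct_mulVec, ← mulVec_transpose, hM, dotProduct_comm]

/-- Cauchy–Schwarz for a positive semidefinite symmetric real matrix. -/
private lemma cs_psd {M : Matrix (Fin m) (Fin m) ℝ} (hM : Mᵀ = M)
    (hpos : ∀ z : Fin m → ℝ, 0 ≤ z ⬝ᵥ M.mulVec z) (x y : Fin m → ℝ) :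
    x ⬝ᵥ M.mulVec y ≤ Real.sqrt (x ⬝ᵥ M.mulVec x) * Real.sqrt (y ⬝ᵥ M.mulVec y) := by
  have key : (x ⬝ᵥ M.mulVec y) ^ 2 ≤ (x ⬝ᵥ M.mulVec x) * (y ⬝ᵥ M.mulVec y) := by
    have hd := discrim_le_zero (a := y ⬝ᵥ M.mulVec y) (b := 2 * (x ⬝ᵥ M.mulVec y))
      (c := x ⬝ᵥ M.mulVec x) ?_
    · rw [discrim] at hd; nlinarith [hd]
    · intro t
      have h0 := hpos (x + t • y)
      have hexp : (x + t • y) ⬝ᵥ M.mulVec (x + t • y)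
          = (y ⬝ᵥ M.mulVec y) * (t * t) + 2 * (x ⬝ᵥ M.mulVec y) * t + x ⬝ᵥ M.mulVec x := by
        rw [mulVec_add, mulVec_smul, dotProduct_add, add_dotProduct, add_dotProduct,
          dotProduct_smul, smul_dotProduct, smul_dotProduct, dotProduct_smul,
          dot_symm_s7 hM y x]
        simp only [smul_eq_mul]
        ring
      linarith [hexp ▸ h0]
  calc x ⬝ᵥ M.mulVec y ≤ |x ⬝ᵥ M.mulVec y| := le_abs_self _
    _ = Real.sqrt ((x ⬝ᵥ M.mulVec y) ^ 2) := (Real.sqrt_sq_eq_abs _).symm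
    _ ≤ Real.sqrt ((x ⬝ᵥ M.mulVec x) * (y ⬝ᵥ M.mulVec y)) := Real.sqrt_le_sqrt key
    _ = _ := Real.sqrt_mul (hpos x) _

private lemma posdef_transpose_eq {M : Matrix (Fin m) (Fin m) ℝ} (hM : M.PosDef) :
    Mᵀ = M := by
  have := hM.isHermitian
  rwa [Matrix.IsHermitian, conjTranspose_eq_transpose_of_trivial] at this

private lemma posdef_quad_pos {M : Matrix (Fin m) (Fin m) ℝ} (hM : M.PosDef)
    {x : Fin m → ℝ} (hx : x ≠ 0) : 0 < x ⬝ᵥ M.mulVec x := by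
  simpa using hM.dotProduct_mulVec_pos hx

private lemma posdef_quad_nonneg {M : Matrix (Fin m) (Fin m) ℝ} (hM : M.PosDef)
    (x : Fin m → ℝ) : 0 ≤ x ⬝ᵥ M.mulVec x := by
  simpa using hM.posSemidef.dotProduct_mulVec_nonneg x

/-- Dual Cauchy–Schwarz: `z ⬝ x ≤ ‖z‖_{M0} ‖x‖_{M0⁻¹}`. -/
private lemma dual_cs {M0 : Matrix (Fin m) (Fin m) ℝ} (hM0 : M0.PosDef)
    (z x : Fin m → ℝ) :
    z ⬝ᵥ x ≤ Real.sqrt (z ⬝ᵥ M0.mulVec z) * Real.sqrt (x ⬝ᵥ M0⁻¹.mulVec x) := by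
  have hdet : IsUnit M0.det := (Matrix.isUnit_iff_isUnit_det M0).mp hM0.isUnit
  set p := M0⁻¹.mulVec x with hp
  have hxp : M0.mulVec p = x := by
    rw [hp, mulVec_mulVec, Matrix.mul_nonsing_inv _ hdet, one_mulVec]
  have h1 : z ⬝ᵥ x = z ⬝ᵥ M0.mulVec p := by rw [hxp]
  have h2 : p ⬝ᵥ M0.mulVec p = x ⬝ᵥ M0⁻¹.mulVec x := by
    rw [hxp.symm] at hp ⊢
    rw [dot_symm_s7 (posdef_transpose_eq hM0) p, hxp, dotProduct_comm]
  rw [h1, ← h2]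
  exact cs_psd (posdef_transpose_eq hM0) (posdef_quad_nonneg hM0) z p

end Aux
section Inv

variable {m : ℕ}

private lemma inv_H0 {M M0 : Matrix (Fin m) (Fin m) ℝ} {c0 c1 : ℝ}
    (hc0 : 0 < c0) (hc1 : 0 < c1) (hM0 : M0.PosDef)
    (hcoer : ∀ x, c0 * (x ⬝ᵥ M0.mulVec x) ≤ x ⬝ᵥ M.mulVec x)
    (hbdd : ∀ x y : Fin m → ℝ, y ⬝ᵥ M.mulVec x ≤
      c1 * Real.sqrt (x ⬝ᵥ M0.mulVec x) * Real.sqrt (y ⬝ᵥ M0.mulVec y)) :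
    IsUnit M ∧
    (∀ x, (c0 / c1 ^ 2) * (x ⬝ᵥ M0⁻¹.mulVec x) ≤ x ⬝ᵥ M⁻¹.mulVec x) ∧
    (∀ x y : Fin m → ℝ, y ⬝ᵥ M⁻¹.mulVec x ≤
      (1 / c0) * Real.sqrt (x ⬝ᵥ M0⁻¹.mulVec x) * Real.sqrt (y ⬝ᵥ M0⁻¹.mulVec y)) := by
  have hM0inv : M0⁻¹.PosDef := hM0.inv
  have hM0det : IsUnit M0.det := (Matrix.isUnit_iff_isUnit_det M0).mp hM0.isUnit
  have hker : ∀ x, M.mulVec x = 0 → x = 0 := by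
    intro x hx
    by_contra hx0
    have h1 := hcoer x
    rw [hx, dotProduct_zero] at h1
    have h2 := posdef_quad_pos hM0 hx0
    nlinarith
  have hU : IsUnit M := by
    rw [← Matrix.mulVec_injective_iff_isUnit]
    have : Function.Injective M.mulVecLin := by
      rw [← LinearMap.ker_eq_bot, LinearMap.ker_eq_bot']
      intro x hx
      exact hker x (by simpa [Matrix.mulVecLin_apply] using hx)
    simpa [Matrix.coe_mulVecLin] using this
  have hdet : IsUnit M.det := (Matrix.isUnit_iff_isUnit_det M).mp hU
  refine ⟨hU, ?_, ?_⟩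
  · -- coercivity for the inverses
    intro x
    obtain ⟨u, hu⟩ : ∃ u, u = M⁻¹.mulVec x := ⟨_, rfl⟩
    obtain ⟨p, hp⟩ : ∃ p, p = M0⁻¹.mulVec x := ⟨_, rfl⟩
    have hxu : M.mulVec u = x := by
      rw [hu, mulVec_mulVec, Matrix.mul_nonsing_inv _ hdet, one_mulVec]
    have hxp : M0.mulVec p = x := by
      rw [hp, mulVec_mulVec, Matrix.mul_nonsing_inv _ hM0det, one_mulVec]
    have hquad : x ⬝ᵥ M⁻¹.mulVec x = u ⬝ᵥ M.mulVec u := by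
      rw [← hu, dotProduct_comm, ← hxu]
    have hM0quad : x ⬝ᵥ M0⁻¹.mulVec x = p ⬝ᵥ M0.mulVec p := by
      rw [← hp, dotProduct_comm, ← hxp]
    set s := Real.sqrt (u ⬝ᵥ M0.mulVec u) with hs
    set t := Real.sqrt (x ⬝ᵥ M0⁻¹.mulVec x) with ht
    have hs0 : 0 ≤ s := Real.sqrt_nonneg _
    have ht0 : 0 ≤ t := Real.sqrt_nonneg _
    have hs2 : s ^ 2 = u ⬝ᵥ M0.mulVec u := Real.sq_sqrt (posdef_quad_nonneg hM0 u)
    have ht2 : t ^ 2 = x ⬝ᵥ M0⁻¹.mulVec x := Real.sq_sqrt (posdef_quad_nonneg hM0inv x)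
    have hlow : c0 * s ^ 2 ≤ x ⬝ᵥ M⁻¹.mulVec x := by
      rw [hquad, hs2]; exact hcoer u
    have hpp : p ⬝ᵥ M0.mulVec p = t ^ 2 := by rw [ht2, hM0quad]
    have ht2b : t ^ 2 = p ⬝ᵥ M.mulVec u := by
      rw [hxu, ht2, ← hp]; exact dotProduct_comm x p
    have hts : t ^ 2 ≤ c1 * s * t := by
      rw [ht2b]
      calc p ⬝ᵥ M.mulVec u ≤ c1 * Real.sqrt (u ⬝ᵥ M0.mulVec u) *
            Real.sqrt (p ⬝ᵥ M0.mulVec p) := hbdd u p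
        _ = c1 * s * t := by rw [← hs, hpp, Real.sqrt_sq ht0]
    rw [← ht2]
    rcases eq_or_lt_of_le ht0 with h | h
    · have h1 : (0:ℝ) ≤ c0 * s ^ 2 := by positivity
      rw [← h]
      norm_num
      nlinarith
    · have hts' : t ≤ c1 * s := by nlinarith
      have h2 : t ^ 2 ≤ c1 ^ 2 * s ^ 2 := by nlinarith
      rw [div_mul_eq_mul_div, div_le_iff₀ (by positivity)]
      nlinarith
  · -- boundedness for the inverses
    intro x y
    obtain ⟨u, hu⟩ : ∃ u, u = M⁻¹.mulVec x := ⟨_, rfl⟩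
    have hxu : M.mulVec u = x := by
      rw [hu, mulVec_mulVec, Matrix.mul_nonsing_inv _ hdet, one_mulVec]
    set s := Real.sqrt (u ⬝ᵥ M0.mulVec u) with hs
    set t := Real.sqrt (x ⬝ᵥ M0⁻¹.mulVec x) with ht
    set t' := Real.sqrt (y ⬝ᵥ M0⁻¹.mulVec y) with ht'
    have hs0 : 0 ≤ s := Real.sqrt_nonneg _
    have ht0 : 0 ≤ t := Real.sqrt_nonneg _
    have ht'0 : 0 ≤ t' := Real.sqrt_nonneg _
    have hs2 : s ^ 2 = u ⬝ᵥ M0.mulVec u := Real.sq_sqrt (posdef_quad_nonneg hM0 u)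
    have hkey : c0 * s ^ 2 ≤ s * t := by
      calc c0 * s ^ 2 = c0 * (u ⬝ᵥ M0.mulVec u) := by rw [hs2]
        _ ≤ u ⬝ᵥ M.mulVec u := hcoer u
        _ = u ⬝ᵥ x := by rw [hxu]
        _ ≤ s * t := dual_cs hM0 u x
    have hgoal : y ⬝ᵥ M⁻¹.mulVec x ≤ s * t' := by
      calc y ⬝ᵥ M⁻¹.mulVec x = u ⬝ᵥ y := by rw [← hu, dotProduct_comm]
        _ ≤ s * t' := dual_cs hM0 u y
    rcases eq_or_lt_of_le hs0 with h | h
    · calc y ⬝ᵥ M⁻¹.mulVec x ≤ s * t' := hgoal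
        _ = 0 * t' := by rw [h]
        _ ≤ (1 / c0) * t * t' := by rw [zero_mul]; positivity
    · have hst : s ≤ t / c0 := by
        rw [le_div_iff₀ hc0]; nlinarith
      calc y ⬝ᵥ M⁻¹.mulVec x ≤ s * t' := hgoal
        _ ≤ (t / c0) * t' := by nlinarith
        _ = (1 / c0) * t * t' := by ring

end Inv
section Block

variable {n m : ℕ}

private lemma dot_sandwich (E : Matrix (Fin n) (Fin m) ℝ) (W : Matrix (Fin m) (Fin m) ℝ)
    (v w : Fin n → ℝ) :
    w ⬝ᵥ (E * W * Eᵀ).mulVec v = (Eᵀ.mulVec w) ⬝ᵥ W.mulVec (Eᵀ.mulVec v) := by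
  rw [← mulVec_mulVec, ← mulVec_mulVec, dotProduct_mulVec w E, ← mulVec_transpose]

private lemma dot_conj (E : Matrix (Fin n) (Fin m) ℝ) (B : Matrix (Fin n) (Fin n) ℝ)
    (x y : Fin m → ℝ) :
    y ⬝ᵥ (Eᵀ * B * E).mulVec x = (E.mulVec y) ⬝ᵥ B.mulVec (E.mulVec x) := by
  rw [← mulVec_mulVec, ← mulVec_mulVec, dotProduct_mulVec y Eᵀ, ← mulVec_transpose,
    transpose_transpose]

private lemma block {A A0 : Matrix (Fin n) (Fin n) ℝ} {c0 c1 : ℝ}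
    (hc0 : 0 < c0) (hc1 : 0 < c1) (hA0 : A0.PosDef)
    (hcoer : ∀ v : Fin n → ℝ, c0 * (v ⬝ᵥ A0.mulVec v) ≤ v ⬝ᵥ A.mulVec v)
    (hbdd : ∀ v w : Fin n → ℝ, w ⬝ᵥ A.mulVec v ≤
      c1 * Real.sqrt (v ⬝ᵥ A0.mulVec v) * Real.sqrt (w ⬝ᵥ A0.mulVec w))
    (E : Matrix (Fin n) (Fin m) ℝ) (hE : Function.Injective E.mulVec) :
    (∀ v : Fin n → ℝ, 0 ≤ v ⬝ᵥ (E * (Eᵀ * A0 * E)⁻¹ * Eᵀ).mulVec v) ∧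
    (∀ v : Fin n → ℝ, Eᵀ.mulVec v ≠ 0 →
      0 < v ⬝ᵥ (E * (Eᵀ * A0 * E)⁻¹ * Eᵀ).mulVec v) ∧
    (∀ v : Fin n → ℝ, (c0 / c1 ^ 2) * (v ⬝ᵥ (E * (Eᵀ * A0 * E)⁻¹ * Eᵀ).mulVec v) ≤
      v ⬝ᵥ (E * (Eᵀ * A * E)⁻¹ * Eᵀ).mulVec v) ∧
    (∀ v w : Fin n → ℝ, w ⬝ᵥ (E * (Eᵀ * A * E)⁻¹ * Eᵀ).mulVec v ≤
      (1 / c0) * Real.sqrt (v ⬝ᵥ (E * (Eᵀ * A0 * E)⁻¹ * Eᵀ).mulVec v) *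
        Real.sqrt (w ⬝ᵥ (E * (Eᵀ * A0 * E)⁻¹ * Eᵀ).mulVec w)) ∧
    ((E * (Eᵀ * A0 * E)⁻¹ * Eᵀ)ᵀ = E * (Eᵀ * A0 * E)⁻¹ * Eᵀ) := by
  have hEne : ∀ x : Fin m → ℝ, x ≠ 0 → E.mulVec x ≠ 0 := by
    intro x hx hc
    exact hx (hE (by rw [hc, mulVec_zero]))
  have hM0 : (Eᵀ * A0 * E).PosDef := by
    refine Matrix.PosDef.of_dotProduct_mulVec_pos ?_ ?_
    · rw [Matrix.IsHermitian, conjTranspose_eq_transpose_of_trivial, transpose_mul,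
        transpose_mul, transpose_transpose, posdef_transpose_eq hA0, Matrix.mul_assoc]
    · intro x hx
      have : 0 < x ⬝ᵥ (Eᵀ * A0 * E).mulVec x := by
        rw [dot_conj]
        exact posdef_quad_pos hA0 (hEne x hx)
      simpa using this
  have hcoerM : ∀ x : Fin m → ℝ,
      c0 * (x ⬝ᵥ (Eᵀ * A0 * E).mulVec x) ≤ x ⬝ᵥ (Eᵀ * A * E).mulVec x := by
    intro x; rw [dot_conj, dot_conj]; exact hcoer (E.mulVec x)
  have hbddM : ∀ x y : Fin m → ℝ, y ⬝ᵥ (Eᵀ * A * E).mulVec x ≤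
      c1 * Real.sqrt (x ⬝ᵥ (Eᵀ * A0 * E).mulVec x) *
        Real.sqrt (y ⬝ᵥ (Eᵀ * A0 * E).mulVec y) := by
    intro x y; rw [dot_conj, dot_conj, dot_conj]; exact hbdd (E.mulVec x) (E.mulVec y)
  obtain ⟨hU, hic, hib⟩ := inv_H0 hc0 hc1 hM0 hcoerM hbddM
  have hM0inv : (Eᵀ * A0 * E)⁻¹.PosDef := hM0.inv
  refine ⟨?_, ?_, ?_, ?_, ?_⟩
  · intro v
    rw [dot_sandwich]
    exact posdef_quad_nonneg hM0inv _
  · intro v hv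
    rw [dot_sandwich]
    exact posdef_quad_pos hM0inv hv
  · intro v
    rw [dot_sandwich, dot_sandwich]
    exact hic _
  · intro v w
    rw [dot_sandwich, dot_sandwich, dot_sandwich]
    exact hib _ _
  · rw [transpose_mul, transpose_mul, transpose_transpose, Matrix.transpose_nonsing_inv,
      transpose_mul, transpose_mul, transpose_transpose, posdef_transpose_eq hA0,
      Matrix.mul_assoc, Matrix.mul_assoc]

end Block
section Assemble

private lemma dot_mulVec_sum {n : ℕ} {ι : Type*} (s : Finset ι) (w v : Fin n → ℝ)
    (M : ι → Matrix (Fin n) (Fin n) ℝ) :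
    w ⬝ᵥ (∑ k ∈ s, M k).mulVec v = ∑ k ∈ s, w ⬝ᵥ (M k).mulVec v := by
  have h : (∑ k ∈ s, M k).mulVec v = ∑ k ∈ s, (M k).mulVec v := by
    have h2 := map_sum (Matrix.mulVec.addMonoidHomLeft (α := ℝ) (m := Fin n) v) M s
    exact h2
  rw [h]
  simp only [dotProduct, Finset.sum_apply, Finset.mul_sum]
  exact Finset.sum_comm

private lemma two_sqrt {a b x y : ℝ} (ha : 0 ≤ a) (hb : 0 ≤ b) (hx : 0 ≤ x) (hy : 0 ≤ y) :
    Real.sqrt a * Real.sqrt b + Real.sqrt x * Real.sqrt y ≤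
      Real.sqrt (a + x) * Real.sqrt (b + y) := by
  have h := Real.sum_sqrt_mul_sqrt_le (f := fun i : Bool => bif i then a else x)
    (g := fun i : Bool => bif i then b else y) Finset.univ
    (fun i => by cases i <;> simpa) (fun i => by cases i <;> simpa)
  simpa [Fintype.sum_bool] using h

end Assemble
/-- If (A, A0) satisfies (H0) with constants (c0, c1), P and the Iₖ are
full-column-rank matrices whose column spaces together span ℝⁿ, and C, C0 are the
additive Schwarz operators built from A and A0 respectively, then C0 is symmetric
positive definite and (C, C0) satisfies (H0) with constants (c0/c1², 1/c0). -/
theorem stmt_7 {n nc Ns : ℕ} (A A0 : Matrix (Fin n) (Fin n) ℝ) (c0 c1 : ℝ)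
    (hc0 : 0 < c0) (hc1 : 0 < c1) (hA0 : A0.PosDef)
    (hcoer : ∀ v : Fin n → ℝ, c0 * (v ⬝ᵥ A0.mulVec v) ≤ v ⬝ᵥ A.mulVec v)
    (hbdd : ∀ v w : Fin n → ℝ, w ⬝ᵥ A.mulVec v ≤
      c1 * Real.sqrt (v ⬝ᵥ A0.mulVec v) * Real.sqrt (w ⬝ᵥ A0.mulVec w))
    (P : Matrix (Fin n) (Fin nc) ℝ)
    (nk : Fin Ns → ℕ) (I : ∀ k : Fin Ns, Matrix (Fin n) (Fin (nk k)) ℝ)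
    (hP : Function.Injective P.mulVec)
    (hI : ∀ k, Function.Injective (I k).mulVec)
    (hspan : (LinearMap.range P.mulVecLin ⊔
      ⨆ k, LinearMap.range (I k).mulVecLin) = ⊤) :
    letI C : Matrix (Fin n) (Fin n) ℝ :=
      P * (Pᵀ * A * P)⁻¹ * Pᵀ + ∑ k, I k * ((I k)ᵀ * A * I k)⁻¹ * (I k)ᵀ
    letI C0 : Matrix (Fin n) (Fin n) ℝ :=
      P * (Pᵀ * A0 * P)⁻¹ * Pᵀ + ∑ k, I k * ((I k)ᵀ * A0 * I k)⁻¹ * (I k)ᵀ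
    C0.PosDef ∧
    (∀ v : Fin n → ℝ, (c0 / c1 ^ 2) * (v ⬝ᵥ C0.mulVec v) ≤ v ⬝ᵥ C.mulVec v) ∧
    (∀ v w : Fin n → ℝ, w ⬝ᵥ C.mulVec v ≤
      (1 / c0) * Real.sqrt (v ⬝ᵥ C0.mulVec v) * Real.sqrt (w ⬝ᵥ C0.mulVec w)) := by
  obtain ⟨hPn, hPpos, hPcoer, hPbdd, hPsymm⟩ := block hc0 hc1 hA0 hcoer hbdd P hP
  have hk := fun k : Fin Ns => block hc0 hc1 hA0 hcoer hbdd (I k) (hI k)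
  have hCdot : ∀ v w : Fin n → ℝ, w ⬝ᵥ (P * (Pᵀ * A * P)⁻¹ * Pᵀ +
      ∑ k, I k * ((I k)ᵀ * A * I k)⁻¹ * (I k)ᵀ).mulVec v =
      w ⬝ᵥ (P * (Pᵀ * A * P)⁻¹ * Pᵀ).mulVec v +
      ∑ k, w ⬝ᵥ (I k * ((I k)ᵀ * A * I k)⁻¹ * (I k)ᵀ).mulVec v := by
    intro v w
    rw [add_mulVec, dotProduct_add, dot_mulVec_sum]
  have hC0dot : ∀ v w : Fin n → ℝ, w ⬝ᵥ (P * (Pᵀ * A0 * P)⁻¹ * Pᵀ +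
      ∑ k, I k * ((I k)ᵀ * A0 * I k)⁻¹ * (I k)ᵀ).mulVec v =
      w ⬝ᵥ (P * (Pᵀ * A0 * P)⁻¹ * Pᵀ).mulVec v +
      ∑ k, w ⬝ᵥ (I k * ((I k)ᵀ * A0 * I k)⁻¹ * (I k)ᵀ).mulVec v := by
    intro v w
    rw [add_mulVec, dotProduct_add, dot_mulVec_sum]
  refine ⟨Matrix.PosDef.of_dotProduct_mulVec_pos ?_ ?_, ?_, ?_⟩
  · -- Hermitian
    rw [Matrix.IsHermitian, conjTranspose_eq_transpose_of_trivial, transpose_add,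
      Matrix.transpose_sum, hPsymm]
    congr 1
    exact Finset.sum_congr rfl fun k _ => (hk k).2.2.2.2
  · -- positivity
    intro x hx
    have hstar : star x = x := by simp
    rw [hstar, hC0dot x x]
    by_cases hPx : Pᵀ.mulVec x = 0
    · by_cases hIx : ∀ k, (I k)ᵀ.mulVec x = 0
      · exfalso
        apply hx
        let f : (Fin n → ℝ) →ₗ[ℝ] ℝ :=
          { toFun := fun u => x ⬝ᵥ u
            map_add' := fun a b => by simp [dotProduct_add]
            map_smul' := fun c a => by simp }
        have h1 : LinearMap.range P.mulVecLin ≤ LinearMap.ker f := by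
          rintro u ⟨y, rfl⟩
          simp only [LinearMap.mem_ker]
          show x ⬝ᵥ P.mulVecLin y = 0
          rw [Matrix.mulVecLin_apply, dotProduct_mulVec, ← mulVec_transpose, hPx,
            zero_dotProduct]
        have h2 : (⨆ k, LinearMap.range (I k).mulVecLin) ≤ LinearMap.ker f := by
          refine iSup_le fun k => ?_
          rintro u ⟨y, rfl⟩
          simp only [LinearMap.mem_ker]
          show x ⬝ᵥ (I k).mulVecLin y = 0
          rw [Matrix.mulVecLin_apply, dotProduct_mulVec, ← mulVec_transpose, hIx k,
            zero_dotProduct]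
        have h3 : (⊤ : Submodule ℝ (Fin n → ℝ)) ≤ LinearMap.ker f :=
          le_trans (le_of_eq hspan.symm) (sup_le h1 h2)
        have h4 : f x = 0 := h3 Submodule.mem_top
        exact dotProduct_self_eq_zero.mp h4
      · push_neg at hIx
        obtain ⟨k0, hk0⟩ := hIx
        refine add_pos_of_nonneg_of_pos (hPn x) (Finset.sum_pos' ?_ ?_)
        · exact fun k _ => (hk k).1 x
        · exact ⟨k0, Finset.mem_univ k0, (hk k0).2.1 x hk0⟩
    · refine add_pos_of_pos_of_nonneg (hPpos x hPx) ?_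
      exact Finset.sum_nonneg fun k _ => (hk k).1 x
  · -- coercivity
    intro v
    rw [hCdot v v, hC0dot v v, mul_add, Finset.mul_sum]
    exact add_le_add (hPcoer v) (Finset.sum_le_sum fun k _ => (hk k).2.2.1 v)
  · -- boundedness
    intro v w
    rw [hCdot v w, hC0dot v v, hC0dot w w]
    have haP : 0 ≤ v ⬝ᵥ (P * (Pᵀ * A0 * P)⁻¹ * Pᵀ).mulVec v := hPn v
    have hbP : 0 ≤ w ⬝ᵥ (P * (Pᵀ * A0 * P)⁻¹ * Pᵀ).mulVec w := hPn w
    have hak : ∀ k, 0 ≤ v ⬝ᵥ (I k * ((I k)ᵀ * A0 * I k)⁻¹ * (I k)ᵀ).mulVec v :=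
      fun k => (hk k).1 v
    have hbk : ∀ k, 0 ≤ w ⬝ᵥ (I k * ((I k)ᵀ * A0 * I k)⁻¹ * (I k)ᵀ).mulVec w :=
      fun k => (hk k).1 w
    have hsa : 0 ≤ ∑ k, v ⬝ᵥ (I k * ((I k)ᵀ * A0 * I k)⁻¹ * (I k)ᵀ).mulVec v :=
      Finset.sum_nonneg fun k _ => hak k
    have hsb : 0 ≤ ∑ k, w ⬝ᵥ (I k * ((I k)ᵀ * A0 * I k)⁻¹ * (I k)ᵀ).mulVec w :=
      Finset.sum_nonneg fun k _ => hbk k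
    calc w ⬝ᵥ (P * (Pᵀ * A * P)⁻¹ * Pᵀ).mulVec v +
        ∑ k, w ⬝ᵥ (I k * ((I k)ᵀ * A * I k)⁻¹ * (I k)ᵀ).mulVec v
        ≤ (1 / c0) * Real.sqrt (v ⬝ᵥ (P * (Pᵀ * A0 * P)⁻¹ * Pᵀ).mulVec v) *
            Real.sqrt (w ⬝ᵥ (P * (Pᵀ * A0 * P)⁻¹ * Pᵀ).mulVec w) +
          ∑ k, (1 / c0) *
            Real.sqrt (v ⬝ᵥ (I k * ((I k)ᵀ * A0 * I k)⁻¹ * (I k)ᵀ).mulVec v) *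
            Real.sqrt (w ⬝ᵥ (I k * ((I k)ᵀ * A0 * I k)⁻¹ * (I k)ᵀ).mulVec w) :=
          add_le_add (hPbdd v w) (Finset.sum_le_sum fun k _ => (hk k).2.2.2.1 v w)
      _ = (1 / c0) * (Real.sqrt (v ⬝ᵥ (P * (Pᵀ * A0 * P)⁻¹ * Pᵀ).mulVec v) *
            Real.sqrt (w ⬝ᵥ (P * (Pᵀ * A0 * P)⁻¹ * Pᵀ).mulVec w) +
          ∑ k, Real.sqrt (v ⬝ᵥ (I k * ((I k)ᵀ * A0 * I k)⁻¹ * (I k)ᵀ).mulVec v) *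
            Real.sqrt (w ⬝ᵥ (I k * ((I k)ᵀ * A0 * I k)⁻¹ * (I k)ᵀ).mulVec w)) := by
          rw [mul_add, Finset.mul_sum, mul_assoc]
          congr 1
          exact Finset.sum_congr rfl fun k _ => mul_assoc _ _ _
      _ ≤ (1 / c0) * (Real.sqrt (v ⬝ᵥ (P * (Pᵀ * A0 * P)⁻¹ * Pᵀ).mulVec v) *
            Real.sqrt (w ⬝ᵥ (P * (Pᵀ * A0 * P)⁻¹ * Pᵀ).mulVec w) +
          Real.sqrt (∑ k, v ⬝ᵥ (I k * ((I k)ᵀ * A0 * I k)⁻¹ * (I k)ᵀ).mulVec v) *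
            Real.sqrt (∑ k, w ⬝ᵥ (I k * ((I k)ᵀ * A0 * I k)⁻¹ * (I k)ᵀ).mulVec w)) := by
          refine mul_le_mul_of_nonneg_left (add_le_add_right ?_ _) (by positivity)
          exact Real.sum_sqrt_mul_sqrt_le _ hak hbk
      _ ≤ (1 / c0) * (Real.sqrt (v ⬝ᵥ (P * (Pᵀ * A0 * P)⁻¹ * Pᵀ).mulVec v +
            ∑ k, v ⬝ᵥ (I k * ((I k)ᵀ * A0 * I k)⁻¹ * (I k)ᵀ).mulVec v) *
          Real.sqrt (w ⬝ᵥ (P * (Pᵀ * A0 * P)⁻¹ * Pᵀ).mulVec w +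
            ∑ k, w ⬝ᵥ (I k * ((I k)ᵀ * A0 * I k)⁻¹ * (I k)ᵀ).mulVec w)) :=
          mul_le_mul_of_nonneg_left (two_sqrt haP hbP hsa hsb) (by positivity)
      _ = _ := (mul_assoc _ _ _).symm
end

section
/- Let E be a finite-dimensional real inner product space, M : E → E a linear map, and α0, α1 > 0 constants such that ⟨v, Mv⟩ ≥ α0·‖v‖² and ‖Mv‖ ≤ α1·‖v‖ for all v ∈ E. Then for every m ∈ ℕ and every r0 ∈ E there exists a real polynomial p with degree at most m and p(0) = 1 such that ‖p(M)(r0)‖ ≤ (1 − α0²/α1²)^{m/2}·‖r0‖. -/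
open scoped RealInnerProductSpace

/-- If M is a linear operator on a finite-dimensional real inner
product space E with ⟨v, Mv⟩ ≥ α0·‖v‖² and ‖Mv‖ ≤ α1·‖v‖ for all v (α0, α1 > 0),
then for every m ∈ ℕ and r0 ∈ E there is a real polynomial p of degree at most m
with p(0) = 1 such that ‖p(M)(r0)‖ ≤ (1 − α0²/α1²)^{m/2}·‖r0‖. -/
theorem stmt_13 {E : Type*} [NormedAddCommGroup E] [InnerProductSpace ℝ E]
    [FiniteDimensional ℝ E] (M : E →ₗ[ℝ] E) (α0 α1 : ℝ)
    (hα0 : 0 < α0) (hα1 : 0 < α1)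
    (hcoer : ∀ v : E, α0 * ‖v‖ ^ 2 ≤ ⟪v, M v⟫)
    (hbdd : ∀ v : E, ‖M v‖ ≤ α1 * ‖v‖) :
    ∀ (m : ℕ) (r0 : E), ∃ p : Polynomial ℝ,
      p.natDegree ≤ m ∧ p.eval 0 = 1 ∧
      ‖(Polynomial.aeval M p) r0‖ ≤
        (1 - α0 ^ 2 / α1 ^ 2) ^ ((m : ℝ) / 2) * ‖r0‖ := by
  intro m r0
  by_cases hr : r0 = 0
  · refine ⟨1, by simp, by simp, by simp [hr]⟩
  -- α0 ≤ α1 via Cauchy-Schwarz on r0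
  have hrn : 0 < ‖r0‖ := norm_pos_iff.mpr hr
  have hCS : ⟪r0, M r0⟫ ≤ ‖r0‖ * ‖M r0‖ := real_inner_le_norm _ _
  have hle : α0 ≤ α1 := by
    have h1 := hcoer r0
    have h2 := hbdd r0
    have h3 : ‖r0‖ * ‖M r0‖ ≤ ‖r0‖ * (α1 * ‖r0‖) :=
      mul_le_mul_of_nonneg_left h2 (norm_nonneg r0)
    nlinarith [mul_pos hrn hrn]
  set c : ℝ := 1 - α0 ^ 2 / α1 ^ 2 with hc
  have hc0 : 0 ≤ c := by
    have : α0 ^ 2 ≤ α1 ^ 2 := by nlinarith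
    have h : α0 ^ 2 / α1 ^ 2 ≤ 1 := by
      rw [div_le_one (by positivity)]; exact this
    rw [hc]; linarith
  set β : ℝ := α0 / α1 ^ 2 with hβ
  have hβ0 : 0 < β := by positivity
  -- contraction bound
  set f : E →ₗ[ℝ] E := 1 - β • M with hf
  have key : ∀ v : E, ‖f v‖ ≤ Real.sqrt c * ‖v‖ := by
    intro v
    have hfv : f v = v - β • M v := by simp [hf]
    have hsq : ‖f v‖ ^ 2 ≤ c * ‖v‖ ^ 2 := by
      rw [hfv]
      have := @norm_sub_sq_real E _ _ v (β • M v)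
      rw [this]
      have h1 : ⟪v, β • M v⟫ = β * ⟪v, M v⟫ := real_inner_smul_right _ _ _
      have h2 : ‖β • M v‖ = β * ‖M v‖ := by
        rw [norm_smul, Real.norm_eq_abs, abs_of_pos hβ0]
      rw [h1, h2]
      have h3 := hcoer v
      have h4 := hbdd v
      have h5 : ‖M v‖ ^ 2 ≤ (α1 * ‖v‖) ^ 2 := by
        nlinarith [norm_nonneg (M v), norm_nonneg v]
      have hcval : c = 1 - α0 ^ 2 / α1 ^ 2 := hc
      have hβval : β = α0 / α1 ^ 2 := hβ
      have hα1ne : (α1 : ℝ) ^ 2 ≠ 0 := by positivity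
      field_simp [hcval, hβval]
      rw [hcval, hβval]
      field_simp
      have A : α1 ^ 4 * α0 ^ 2 * ‖M v‖ ^ 2 ≤ α1 ^ 4 * α0 ^ 2 * (α1 * ‖v‖) ^ 2 :=
        mul_le_mul_of_nonneg_left h5 (by positivity)
      have B : 2 * α1 ^ 6 * α0 * (α0 * ‖v‖ ^ 2) ≤ 2 * α1 ^ 6 * α0 * ⟪v, M v⟫ :=
        mul_le_mul_of_nonneg_left h3 (by positivity)
      nlinarith [A, B, mul_le_mul_of_nonneg_left h5 (sq_nonneg α0),
        mul_le_mul_of_nonneg_left h3 (by positivity : (0:ℝ) ≤ 2 * α1 ^ 2 * α0)]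
    have := Real.sqrt_le_sqrt hsq
    rwa [Real.sqrt_sq (norm_nonneg _), Real.sqrt_mul hc0, Real.sqrt_sq (norm_nonneg v)] at this
  -- the polynomial
  refine ⟨(1 - Polynomial.C β * Polynomial.X) ^ m, ?_, by simp, ?_⟩
  · calc ((1 - Polynomial.C β * Polynomial.X) ^ m).natDegree
        ≤ m * (1 - Polynomial.C β * Polynomial.X).natDegree :=
          Polynomial.natDegree_pow_le
      _ ≤ m * 1 := Nat.mul_le_mul_left m (by compute_degree)
      _ = m := Nat.mul_one m
  · have haev : Polynomial.aeval M ((1 - Polynomial.C β * Polynomial.X) ^ m) = f ^ m := by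
      rw [map_pow]
      congr 1
      rw [map_sub, map_one, map_mul, Polynomial.aeval_X, Polynomial.aeval_C, hf]
      congr 1
    rw [haev]
    have hpow : ∀ (n : ℕ) (v : E), ‖(f ^ n) v‖ ≤ Real.sqrt c ^ n * ‖v‖ := by
      intro n
      induction n with
      | zero => intro v; simp
      | succ k ih =>
        intro v
        rw [pow_succ, Module.End.mul_apply]
        calc ‖(f ^ k) (f v)‖ ≤ Real.sqrt c ^ k * ‖f v‖ := ih (f v)
          _ ≤ Real.sqrt c ^ k * (Real.sqrt c * ‖v‖) := by
              apply mul_le_mul_of_nonneg_left (key v) (by positivity)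
          _ = Real.sqrt c ^ (k + 1) * ‖v‖ := by ring
    have hrpow : c ^ ((m : ℝ) / 2) = Real.sqrt c ^ m := by
      rw [show ((m : ℝ) / 2) = (1 / 2) * m by ring, Real.rpow_mul hc0,
        Real.rpow_natCast, ← Real.sqrt_eq_rpow]
    rw [hrpow]
    exact hpow m r0
end

section
/- Let A, B, Z be real n×n matrices with A and B invertible and Z symmetric positive definite, and suppose the pair (A, Z) satisfies hypothesis (H0) with constants (α0, α1). Equip ℝⁿ with the norm ‖v‖_{Z⁻¹} = √(vᵀZ⁻¹v). Then for every r ∈ ℝⁿ there exist coefficients α, σ ∈ ℝ such that ‖r − A(α·B⁻¹ + σ·Z⁻¹)r‖²_{Z⁻¹} ≤ (1 − α0²/α1²)·‖r‖²_{Z⁻¹}; in particular, inf_{α,σ ∈ ℝ} ‖r − A(α·B⁻¹ + σ·Z⁻¹)r‖_{Z⁻¹} ≤ inf_{σ ∈ ℝ} ‖r − σ·A Z⁻¹ r‖_{Z⁻¹}. -/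
open Matrix

private lemma symm_dot {n : ℕ} (M : Matrix (Fin n) (Fin n) ℝ) (h : Mᵀ = M) (v w : Fin n → ℝ) :
    v ⬝ᵥ M.mulVec w = w ⬝ᵥ M.mulVec v := by
  rw [Matrix.dotProduct_mulVec, ← Matrix.mulVec_transpose, h, dotProduct_comm]


/-- If A, B are invertible, Z is symmetric positive definite and (A, Z)
satisfies (H0) with constants (α0, α1), then for every r there are coefficients
α, σ ∈ ℝ with ‖r − A(α·B⁻¹ + σ·Z⁻¹)r‖²_{Z⁻¹} ≤ (1 − α0²/α1²)·‖r‖²_{Z⁻¹}; in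
particular the infimum over (α, σ) is bounded by the infimum over σ of
‖r − σ·AZ⁻¹r‖_{Z⁻¹}. -/
theorem stmt_14 {n : ℕ} (A B Z : Matrix (Fin n) (Fin n) ℝ) (α0 α1 : ℝ)
    (hα0 : 0 < α0) (hα1 : 0 < α1) (hA : IsUnit A) (hB : IsUnit B) (hZ : Z.PosDef)
    (hcoer : ∀ v : Fin n → ℝ, α0 * (v ⬝ᵥ Z.mulVec v) ≤ v ⬝ᵥ A.mulVec v)
    (hbdd : ∀ v w : Fin n → ℝ, w ⬝ᵥ A.mulVec v ≤
      α1 * Real.sqrt (v ⬝ᵥ Z.mulVec v) * Real.sqrt (w ⬝ᵥ Z.mulVec w)) :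
    ∀ r : Fin n → ℝ,
      (∃ α σ : ℝ,
        (r - (A * (α • B⁻¹ + σ • Z⁻¹)).mulVec r) ⬝ᵥ
            Z⁻¹.mulVec (r - (A * (α • B⁻¹ + σ • Z⁻¹)).mulVec r) ≤
          (1 - α0 ^ 2 / α1 ^ 2) * (r ⬝ᵥ Z⁻¹.mulVec r)) ∧
      (⨅ p : ℝ × ℝ,
          Real.sqrt ((r - (A * (p.1 • B⁻¹ + p.2 • Z⁻¹)).mulVec r) ⬝ᵥ
            Z⁻¹.mulVec (r - (A * (p.1 • B⁻¹ + p.2 • Z⁻¹)).mulVec r))) ≤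
        ⨅ σ : ℝ,
          Real.sqrt ((r - σ • (A * Z⁻¹).mulVec r) ⬝ᵥ
            Z⁻¹.mulVec (r - σ • (A * Z⁻¹).mulVec r)) := by
  intro r
  have hZi : Z⁻¹.PosDef := hZ.inv
  have hZs : Zᵀ = Z := by have := hZ.1; simpa [Matrix.IsHermitian] using this
  have hZis : Z⁻¹ᵀ = Z⁻¹ := by have := hZi.1; simpa [Matrix.IsHermitian] using this
  have hZZi : ∀ x : Fin n → ℝ, Z.mulVec (Z⁻¹.mulVec x) = x := fun x => by
    rw [Matrix.mulVec_mulVec, Matrix.mul_nonsing_inv _ hZ.det_pos.ne'.isUnit,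
      Matrix.one_mulVec]
  have hZiZ : ∀ x : Fin n → ℝ, Z⁻¹.mulVec (Z.mulVec x) = x := fun x => by
    rw [Matrix.mulVec_mulVec, Matrix.nonsing_inv_mul _ hZ.det_pos.ne'.isUnit,
      Matrix.one_mulVec]
  have hZipos : ∀ x : Fin n → ℝ, x ≠ 0 → 0 < x ⬝ᵥ Z⁻¹.mulVec x := fun x hx => by
    have := hZi.dotProduct_mulVec_pos hx; simpa using this
  have hZpos : ∀ x : Fin n → ℝ, x ≠ 0 → 0 < x ⬝ᵥ Z.mulVec x := fun x hx => by
    have := hZ.dotProduct_mulVec_pos hx; simpa using this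
  -- the candidate point: α = 0, σ arbitrary, reduces to σ • s where s = A Z⁻¹ r
  set u : Fin n → ℝ := Z⁻¹.mulVec r with hu
  set s : Fin n → ℝ := A.mulVec u with hs
  have hpt : ∀ σ : ℝ, (A * ((0:ℝ) • B⁻¹ + σ • Z⁻¹)).mulVec r = σ • s := fun σ => by
    rw [zero_smul, zero_add, Matrix.mul_smul, Matrix.smul_mulVec,
      ← Matrix.mulVec_mulVec]
  have hpt' : ∀ σ : ℝ, (A * Z⁻¹).mulVec r = s := fun σ => by
    rw [← Matrix.mulVec_mulVec]
  -- quadratic form values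
  have hN : r ⬝ᵥ Z⁻¹.mulVec r = u ⬝ᵥ Z.mulVec u := by
    conv_lhs => rw [show r = Z.mulVec u from (hZZi r).symm]
    rw [hZiZ, dotProduct_comm]
  have hP : r ⬝ᵥ Z⁻¹.mulVec s = u ⬝ᵥ A.mulVec u := by
    rw [Matrix.dotProduct_mulVec, ← Matrix.mulVec_transpose, hZis]
  set N : ℝ := u ⬝ᵥ Z.mulVec u with hNdef
  set P : ℝ := u ⬝ᵥ A.mulVec u with hPdef
  set q : ℝ := s ⬝ᵥ Z⁻¹.mulVec s with hqdef
  -- the bound q ≤ α1² N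
  have hq_nonneg : 0 ≤ q := by
    rcases eq_or_ne s 0 with h | h
    · simp [hqdef, h]
    · exact (hZipos s h).le
  have hN_nonneg : 0 ≤ N := by
    rcases eq_or_ne u 0 with h | h
    · simp [hNdef, h]
    · exact (hZpos u h).le
  have hqle : q ≤ α1 ^ 2 * N := by
    have h1 := hbdd u (Z⁻¹.mulVec s)
    have e1 : (Z⁻¹.mulVec s) ⬝ᵥ A.mulVec u = q := by
      rw [← hs, dotProduct_comm, hqdef]
    have e2 : (Z⁻¹.mulVec s) ⬝ᵥ Z.mulVec (Z⁻¹.mulVec s) = q := by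
      rw [hZZi, dotProduct_comm, hqdef]
    rw [e1, e2, ← hNdef] at h1
    have h2 : Real.sqrt q * Real.sqrt q ≤ (α1 * Real.sqrt N) * Real.sqrt q := by
      rw [Real.mul_self_sqrt hq_nonneg]; linarith
    have h3 : Real.sqrt q ≤ α1 * Real.sqrt N := by
      rcases eq_or_lt_of_le (Real.sqrt_nonneg q) with h | h
      · rw [← h]; positivity
      · exact le_of_mul_le_mul_right (by linarith) h
    calc q = Real.sqrt q * Real.sqrt q := (Real.mul_self_sqrt hq_nonneg).symm
      _ ≤ (α1 * Real.sqrt N) * (α1 * Real.sqrt N) := by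
          apply mul_le_mul h3 h3 (Real.sqrt_nonneg q); positivity
      _ = α1 ^ 2 * (Real.sqrt N * Real.sqrt N) := by ring
      _ = α1 ^ 2 * N := by rw [Real.mul_self_sqrt hN_nonneg]
  have hPge : α0 * N ≤ P := hcoer u
  constructor
  · -- existence part
    rcases eq_or_ne r 0 with hr | hr
    · exact ⟨0, 0, by simp [hr]⟩
    · have hune : u ≠ 0 := fun h => hr (by rw [← hZZi r, ← hu, h, Matrix.mulVec_zero])
      have hNpos : 0 < N := hZpos u hune
      have hPpos : 0 < P := lt_of_lt_of_le (by positivity) hPge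
      have hsne : s ≠ 0 := fun h => by
        rw [hPdef, ← hs, h, dotProduct_zero] at hPpos; exact lt_irrefl 0 hPpos
      have hqpos : 0 < q := hZipos s hsne
      refine ⟨0, P / q, ?_⟩
      rw [hpt (P / q)]
      have e3 : s ⬝ᵥ Z⁻¹.mulVec r = P := by rw [symm_dot Z⁻¹ hZis, hP]
      have expand : (r - (P / q) • s) ⬝ᵥ Z⁻¹.mulVec (r - (P / q) • s)
          = N - 2 * (P / q) * P + (P / q) ^ 2 * q := by
        simp only [Matrix.mulVec_sub, Matrix.mulVec_smul, sub_dotProduct,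
          dotProduct_sub, smul_dotProduct, dotProduct_smul,
          smul_eq_mul, hN, hP, e3, ← hqdef]
        ring
      rw [expand, hN]
      have key : (α0 ^ 2 / α1 ^ 2) * N ≤ P ^ 2 / q := by
        rw [div_mul_eq_mul_div, div_le_div_iff₀ (by positivity) hqpos]
        calc α0 ^ 2 * N * q ≤ α0 ^ 2 * N * (α1 ^ 2 * N) := by
              apply mul_le_mul_of_nonneg_left hqle (by positivity)
          _ = (α0 * N) ^ 2 * α1 ^ 2 := by ring
          _ ≤ P ^ 2 * α1 ^ 2 := by
              apply mul_le_mul_of_nonneg_right _ (by positivity)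
              exact pow_le_pow_left₀ (by positivity) hPge 2
      have expand2 : N - 2 * (P / q) * P + (P / q) ^ 2 * q = N - P ^ 2 / q := by
        field_simp; ring
      rw [expand2]
      nlinarith [key]
  · -- infimum part
    apply le_ciInf
    intro σ
    have hbb : BddBelow (Set.range fun p : ℝ × ℝ =>
        Real.sqrt ((r - (A * (p.1 • B⁻¹ + p.2 • Z⁻¹)).mulVec r) ⬝ᵥ
          Z⁻¹.mulVec (r - (A * (p.1 • B⁻¹ + p.2 • Z⁻¹)).mulVec r))) := by
      refine ⟨0, ?_⟩
      rintro x ⟨p, rfl⟩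
      exact Real.sqrt_nonneg _
    have := ciInf_le hbb ((0 : ℝ), σ)
    refine this.trans_eq ?_
    simp only [hpt σ, hpt' σ]
end

section
/- Let A and Z be real n×n matrices such that Z is symmetric positive definite, the pair (A, Z) satisfies hypothesis (H0) with constants (α0, α1), and A is invertible. Then for every m ∈ ℕ and every r0 ∈ ℝⁿ there exists a real polynomial p with degree at most m and p(0) = 1 such that ‖p(A Z⁻¹) r0‖_{Z⁻¹} ≤ (1 − α0²/α1²)^{m/2}·‖r0‖_{Z⁻¹}, where ‖v‖_{Z⁻¹} = √(vᵀZ⁻¹v) and p(A Z⁻¹) denotes evaluation of p at the matrix A Z⁻¹. -/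
open Matrix Polynomial

private lemma dot_symm_aux {n : ℕ} {S : Matrix (Fin n) (Fin n) ℝ} (hS : Sᵀ = S)
    (x y : Fin n → ℝ) : x ⬝ᵥ S.mulVec y = y ⬝ᵥ S.mulVec x := by
  rw [dotProduct_mulVec, ← Matrix.mulVec_transpose, hS, dotProduct_comm]

/-- If Z is symmetric positive definite, (A, Z) satisfies (H0) with
constants (α0, α1), and A is invertible, then for every m ∈ ℕ and r0 ∈ ℝⁿ there is a
real polynomial p of degree at most m with p(0) = 1 such that
‖p(AZ⁻¹)r0‖_{Z⁻¹} ≤ (1 − α0²/α1²)^{m/2}·‖r0‖_{Z⁻¹}, where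
‖v‖_{Z⁻¹} = √(vᵀZ⁻¹v). -/
theorem stmt_18 {n : ℕ} (A Z : Matrix (Fin n) (Fin n) ℝ) (α0 α1 : ℝ)
    (hα0 : 0 < α0) (hα1 : 0 < α1) (hZ : Z.PosDef) (hA : IsUnit A)
    (hcoer : ∀ v : Fin n → ℝ, α0 * (v ⬝ᵥ Z.mulVec v) ≤ v ⬝ᵥ A.mulVec v)
    (hbdd : ∀ v w : Fin n → ℝ, w ⬝ᵥ A.mulVec v ≤
      α1 * Real.sqrt (v ⬝ᵥ Z.mulVec v) * Real.sqrt (w ⬝ᵥ Z.mulVec w)) :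
    ∀ (m : ℕ) (r0 : Fin n → ℝ), ∃ p : Polynomial ℝ,
      p.natDegree ≤ m ∧ p.eval 0 = 1 ∧
      Real.sqrt ((Polynomial.aeval (A * Z⁻¹) p).mulVec r0 ⬝ᵥ
          Z⁻¹.mulVec ((Polynomial.aeval (A * Z⁻¹) p).mulVec r0)) ≤
        (1 - α0 ^ 2 / α1 ^ 2) ^ ((m : ℝ) / 2) *
          Real.sqrt (r0 ⬝ᵥ Z⁻¹.mulVec r0) := by
  intro m r0
  rcases isEmpty_or_nonempty (Fin n) with hn | hn
  · refine ⟨1, by simp, by simp, ?_⟩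
    simp [dotProduct]
  -- basic facts
  have hZZ : Z * Z⁻¹ = 1 := Matrix.mul_nonsing_inv Z (isUnit_iff_ne_zero.mpr hZ.det_pos.ne')
  have hZinv : Z⁻¹.PosDef := hZ.inv
  have hsymm : (Z⁻¹)ᵀ = Z⁻¹ := by
    have h : Z⁻¹.IsSymm := by simpa using hZinv.1
    exact h
  have hnn : ∀ x : Fin n → ℝ, 0 ≤ x ⬝ᵥ Z⁻¹.mulVec x := fun x => by
    simpa using hZinv.posSemidef.dotProduct_mulVec_nonneg x
  -- α0 ≤ α1
  obtain ⟨i⟩ := hn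
  have hα01 : α0 ≤ α1 := by
    have hv : ((fun _ => (1:ℝ)) : Fin n → ℝ) ≠ 0 := fun h => one_ne_zero (congrFun h i)
    have hc : 0 < (fun _ => (1:ℝ)) ⬝ᵥ Z.mulVec (fun _ => (1:ℝ)) := by
      simpa using hZ.dotProduct_mulVec_pos hv
    have h1 := hcoer (fun _ => (1:ℝ))
    have h2 := hbdd (fun _ => (1:ℝ)) (fun _ => (1:ℝ))
    rw [mul_assoc, Real.mul_self_sqrt hc.le] at h2
    have := h1.trans h2
    exact le_of_mul_le_mul_right this hc
  set t : ℝ := 1 - α0 ^ 2 / α1 ^ 2 with htdef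
  have ht0 : 0 ≤ t := by
    have : α0 ^ 2 ≤ α1 ^ 2 := by nlinarith
    have h2 : α0 ^ 2 / α1 ^ 2 ≤ 1 := (div_le_one (by positivity)).mpr this
    rw [htdef]
    linarith
  set β : ℝ := α0 / α1 ^ 2 with hβ
  have hβ0 : 0 ≤ β := by positivity
  -- key one-step contraction
  have key : ∀ v : Fin n → ℝ,
      (v - β • (A * Z⁻¹).mulVec v) ⬝ᵥ Z⁻¹.mulVec (v - β • (A * Z⁻¹).mulVec v)
        ≤ t * (v ⬝ᵥ Z⁻¹.mulVec v) := by
    intro v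
    set u := Z⁻¹.mulVec v with hu
    have hMv : (A * Z⁻¹).mulVec v = A.mulVec u := (mulVec_mulVec v A Z⁻¹).symm
    have hZu : Z.mulVec u = v := by rw [hu, mulVec_mulVec, hZZ, one_mulVec]
    set c := v ⬝ᵥ Z⁻¹.mulVec v with hcdef
    have hcZ : u ⬝ᵥ Z.mulVec u = c := by rw [hZu, hcdef, hu, dotProduct_comm]
    have hc0 : 0 ≤ c := hnn v
    -- coercivity term
    have h1 : α0 * c ≤ v ⬝ᵥ Z⁻¹.mulVec (A.mulVec u) := by
      have hco := hcoer u
      rw [hcZ] at hco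
      have e : v ⬝ᵥ Z⁻¹.mulVec (A.mulVec u) = u ⬝ᵥ A.mulVec u := by
        rw [dot_symm_aux hsymm, ← hu, dotProduct_comm]
      rw [e]; exact hco
    -- boundedness term
    set s := A.mulVec u ⬝ᵥ Z⁻¹.mulVec (A.mulVec u) with hs
    have hs0 : 0 ≤ s := hnn _
    have hsc : s ≤ α1 ^ 2 * c := by
      set w := Z⁻¹.mulVec (A.mulVec u) with hw
      have hZw : Z.mulVec w = A.mulVec u := by rw [hw, mulVec_mulVec, hZZ, one_mulVec]
      have hws : w ⬝ᵥ Z.mulVec w = s := by rw [hZw, hs, hw, dotProduct_comm]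
      have hb := hbdd u w
      rw [hcZ, hws] at hb
      have hwAu : w ⬝ᵥ A.mulVec u = s := by rw [hs, hw, dotProduct_comm]
      rw [hwAu] at hb
      have hsq : Real.sqrt s * Real.sqrt s = s := Real.mul_self_sqrt hs0
      have hcq : Real.sqrt c * Real.sqrt c = c := Real.mul_self_sqrt hc0
      nlinarith [sq_nonneg (α1 * Real.sqrt c - Real.sqrt s), Real.sqrt_nonneg s,
        Real.sqrt_nonneg c]
    -- expand the square
    have expand : (v - β • (A * Z⁻¹).mulVec v) ⬝ᵥ Z⁻¹.mulVec (v - β • (A * Z⁻¹).mulVec v)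
        = c - 2 * β * (v ⬝ᵥ Z⁻¹.mulVec (A.mulVec u)) + β ^ 2 * s := by
      rw [hMv]
      have cross : (A.mulVec u) ⬝ᵥ Z⁻¹.mulVec v = v ⬝ᵥ Z⁻¹.mulVec (A.mulVec u) :=
        dot_symm_aux hsymm _ _
      rw [sub_dotProduct, Matrix.mulVec_sub, dotProduct_sub, dotProduct_sub,
        smul_dotProduct, smul_dotProduct, Matrix.mulVec_smul, dotProduct_smul,
        dotProduct_smul, cross]
      simp only [smul_eq_mul, hcdef, hs]
      ring
    rw [expand]
    have i1 : 2 * β * (α0 * c) ≤ 2 * β * (v ⬝ᵥ Z⁻¹.mulVec (A.mulVec u)) := by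
      apply mul_le_mul_of_nonneg_left h1; positivity
    have i2 : β ^ 2 * s ≤ β ^ 2 * (α1 ^ 2 * c) := by
      apply mul_le_mul_of_nonneg_left hsc; positivity
    have e1 : 2 * β * (α0 * c) = 2 * (α0 ^ 2 / α1 ^ 2) * c := by
      rw [hβ]; field_simp
    have e2 : β ^ 2 * (α1 ^ 2 * c) = (α0 ^ 2 / α1 ^ 2) * c := by
      rw [hβ]; field_simp
    have e3 : t * c = c - (α0 ^ 2 / α1 ^ 2) * c := by rw [htdef]; ring
    linarith
  -- iterate
  set M := A * Z⁻¹ with hM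
  set Q : Polynomial ℝ := 1 - C β * X with hQ
  have hQeq : aeval M Q = 1 - β • M := by
    rw [hQ]
    simp only [map_sub, _root_.map_one, _root_.map_mul, aeval_X, aeval_C,
      Algebra.algebraMap_eq_smul_one, smul_mul_assoc, one_mul]
  have hQstep : ∀ x : Fin n → ℝ, (aeval M Q).mulVec x = x - β • M.mulVec x := by
    intro x
    rw [hQeq, Matrix.sub_mulVec, Matrix.one_mulVec, Matrix.smul_mulVec]
  have main : ∀ (k : ℕ) (v : Fin n → ℝ),
      (aeval M (Q ^ k)).mulVec v ⬝ᵥ Z⁻¹.mulVec ((aeval M (Q ^ k)).mulVec v)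
        ≤ t ^ k * (v ⬝ᵥ Z⁻¹.mulVec v) := by
    intro k
    induction k with
    | zero => intro v; simp
    | succ k ih =>
      intro v
      have hsplit : aeval M (Q ^ (k + 1)) = aeval M Q * aeval M (Q ^ k) := by
        rw [pow_succ', _root_.map_mul]
      rw [hsplit, ← mulVec_mulVec, hQstep]
      have h1 := key ((aeval M (Q ^ k)).mulVec v)
      have h2 := mul_le_mul_of_nonneg_left (ih v) ht0
      have h3 : t * (t ^ k * (v ⬝ᵥ Z⁻¹.mulVec v)) = t ^ (k + 1) * (v ⬝ᵥ Z⁻¹.mulVec v) := by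
        ring
      linarith
  refine ⟨Q ^ m, ?_, ?_, ?_⟩
  · calc (Q ^ m).natDegree ≤ m * Q.natDegree := natDegree_pow_le
      _ ≤ m * 1 := by
          apply Nat.mul_le_mul_left
          rw [hQ]
          calc (1 - C β * X).natDegree ≤ max (1 : Polynomial ℝ).natDegree (C β * X).natDegree :=
                natDegree_sub_le _ _
            _ ≤ 1 := by
                simp only [natDegree_one, max_le_iff]
                exact ⟨Nat.zero_le 1, (natDegree_C_mul_le β X).trans (by simp)⟩
      _ = m := Nat.mul_one m
  · rw [hQ]; simp
  · have hmain := main m r0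
    have hsq := Real.sqrt_le_sqrt hmain
    refine hsq.trans (le_of_eq ?_)
    rw [Real.sqrt_mul (pow_nonneg ht0 m)]
    congr 1
    rw [Real.sqrt_eq_rpow, ← Real.rpow_natCast t m, ← Real.rpow_mul ht0]
    congr 1
    ring
end
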